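/- Suppose Assumptions A, B and C-2 hold and let (x^r, y^r) be generated by HiBSA (concave case). Define the potential function P^{r+1} := ℓ(x^{r+1}, y^{r+1}) − (γ^r/2)‖y^{r+1}‖² − (2/ρ)(γ^{r−1}/γ^r − 1)‖y^{r+1}‖² + (1/(2ρ) + 2/(ρ²γ^r) + (2/ρ²)(1/γ^{r+1} − 1/γ^r))‖y^{r+1} − y^r‖². Suppose that for all r: β^r > ρL_y² + 4L_y²/(ρ(γ^r)²) − 2μ with μ := min_i μ_i, β^r > L_{x_i} for all i, the sequence γ^r > 0 is nonincreasing, and 1/γ^{r+1} − 1/γ^r ≤ ρ/5. Then for every r, P^{r+1} ≤ P^r − (β^r/2 + μ − (ρL_y²/2 + 2L_y²/(ρ(γ^r)²)))‖x^{r+1} − x^r‖² − (1/(10ρ))‖y^{r+1} − y^r‖² + ((γ^{r−1} − γ^r)/2)‖y^{r+1}‖² + (2/ρ)(γ^{r−2}/γ^{r−1} − γ^{r−1}/γ^r)‖y^r‖². -/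

import Mathlib

open scoped RealInnerProductSpace

/-- The `i`-th block space `ℝ^N`. -/
abbrev Blk (N : ℕ) : Type := EuclideanSpace ℝ (Fin N)

/-- The full `x`-space `ℝ^{NK}`, with the Euclidean (ℓ²) product norm. -/
abbrev XVec (N K : ℕ) : Type := PiLp 2 (fun _ : Fin K => Blk N)

/-- The `y`-space `ℝ^M`. -/
abbrev YVec (M : ℕ) : Type := EuclideanSpace ℝ (Fin M)

/-- `hibsaW xs r i = w_i^{r+1} = (x_1^{r+1},…,x_{i−1}^{r+1}, x_i^r,…,x_K^r)`. -/
noncomputable def hibsaW {N K : ℕ} (xs : ℕ → XVec N K) (r : ℕ) (i : Fin K) : XVec N K :=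
  WithLp.toLp 2 (fun j : Fin K => if (j : ℕ) < (i : ℕ) then xs (r + 1) j else xs r j)

/-- Replace the `i`-th block of `x` by `z`. -/
noncomputable def blockUpdate {N K : ℕ} (x : XVec N K) (i : Fin K) (z : Blk N) : XVec N K :=
  WithLp.toLp 2 (Function.update x i z)

section helpers

lemma hibsa_limit_aux {A B C : ℝ} (h : ∀ t : ℝ, 0 < t → t ≤ 1 → A ≤ B + t * C) : A ≤ B := by
  rcases le_or_gt C 0 with hC | hC
  · have h1 := h 1 one_pos le_rfl; linarith
  · by_contra hc
    push_neg at hc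
    have hd : 0 < (A - B) / (2 * C) := div_pos (by linarith) (by linarith)
    have ht0 : 0 < min 1 ((A - B) / (2 * C)) := lt_min one_pos hd
    have h1 := h _ ht0 (min_le_left _ _)
    have h2 : min 1 ((A - B) / (2 * C)) * C ≤ ((A - B) / (2 * C)) * C :=
      mul_le_mul_of_nonneg_right (min_le_right _ _) hC.le
    have h3 : ((A - B) / (2 * C)) * C = (A - B) / 2 := by field_simp
    linarith

lemma hibsa_seg_mem {E : Type*} [AddCommGroup E] [Module ℝ E] {C : Set E} (hC : Convex ℝ C)
    {a b : E} (ha : a ∈ C) (hb : b ∈ C) {t : ℝ} (h0 : 0 ≤ t) (h1 : t ≤ 1) :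
    a + t • (b - a) ∈ C := by
  have h := hC ha hb (by linarith : (0:ℝ) ≤ 1 - t) h0 (by ring)
  have he : a + t • (b - a) = (1 - t) • a + t • b := by module
  rw [he]; exact h

lemma hibsa_seg_norm_sq {E : Type*} [NormedAddCommGroup E] [InnerProductSpace ℝ E]
    (a b c : E) (t : ℝ) :
    ‖a + t • (b - a) - c‖ ^ 2
      = (1 - t) * ‖a - c‖ ^ 2 + t * ‖b - c‖ ^ 2 - t * (1 - t) * ‖b - a‖ ^ 2 := by
  have e1 : a + t • (b - a) - c = (a - c) + t • (b - a) := by abel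
  have e2 : b - c = (a - c) + (b - a) := by abel
  rw [e1, e2]
  rw [norm_add_sq_real, norm_add_sq_real, norm_smul, real_inner_smul_right]
  rw [mul_pow]
  have : ‖t‖ ^ 2 = t ^ 2 := by rw [Real.norm_eq_abs, sq_abs]
  rw [this]
  ring

lemma hibsa_seg_ineq {E : Type*} [NormedAddCommGroup E] [InnerProductSpace ℝ E]
    (C : Set E) (F : E → ℝ) (G : E → E) (m : ℝ)
    (key : ∀ z ∈ C, ∀ z' ∈ C, ⟪G z', z - z'⟫ + m / 2 * ‖z - z'‖ ^ 2 ≤ F z - F z')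
    {a b : E} (ha : a ∈ C) (hb : b ∈ C) {t : ℝ} (ht0 : 0 ≤ t) (ht1 : t ≤ 1)
    (hm : a + t • (b - a) ∈ C) :
    F (a + t • (b - a)) ≤ (1 - t) * F a + t * F b - m / 2 * t * (1 - t) * ‖b - a‖ ^ 2 := by
  set p := a + t • (b - a) with hp
  have h1 := key a ha p hm
  have h2 := key b hb p hm
  have ea : a - p = (-t) • (b - a) := by rw [hp]; module
  have eb : b - p = (1 - t) • (b - a) := by rw [hp]; module
  rw [ea] at h1
  rw [eb] at h2
  rw [real_inner_smul_right, norm_smul] at h1 h2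
  rw [mul_pow] at h1 h2
  have hna : ‖(-t)‖ ^ 2 = t ^ 2 := by rw [Real.norm_eq_abs, sq_abs]; ring_nf
  have hnb : ‖(1 - t)‖ ^ 2 = (1 - t) ^ 2 := by rw [Real.norm_eq_abs, sq_abs]
  rw [hna] at h1
  rw [hnb] at h2
  have h1' := mul_le_mul_of_nonneg_left h1 (by linarith : (0:ℝ) ≤ 1 - t)
  have h2' := mul_le_mul_of_nonneg_left h2 ht0
  nlinarith [h1', h2']

lemma hibsa_min_quad {E : Type*} [NormedAddCommGroup E] [InnerProductSpace ℝ E]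
    {Φ : E → ℝ} {m : ℝ} {x z : E}
    (hseg : ∀ t : ℝ, 0 < t → t ≤ 1 →
      Φ (x + t • (z - x)) ≤ (1 - t) * Φ x + t * Φ z - m / 2 * t * (1 - t) * ‖z - x‖ ^ 2)
    (hmin : ∀ t : ℝ, 0 < t → t ≤ 1 → Φ x ≤ Φ (x + t • (z - x))) :
    Φ x + m / 2 * ‖z - x‖ ^ 2 ≤ Φ z := by
  apply hibsa_limit_aux (C := m / 2 * ‖z - x‖ ^ 2)
  intro t ht0 ht1
  have h1 := (hmin t ht0 ht1).trans (hseg t ht0 ht1)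
  have h3 : t * (Φ x + m / 2 * ‖z - x‖ ^ 2) ≤ t * (Φ z + t * (m / 2 * ‖z - x‖ ^ 2)) := by
    nlinarith [h1]
  exact le_of_mul_le_mul_left h3 ht0

lemma hibsa_mono_helper {φ d : ℝ → ℝ} (hφ : ∀ t, HasDerivAt φ (d t) t) {c L : ℝ}
    (hd : ∀ t, 0 ≤ t → t ≤ 1 → d t ≤ c + L * t) : φ 1 ≤ φ 0 + c + L / 2 := by
  set ψ : ℝ → ℝ := fun t => c * t + L / 2 * t ^ 2 - φ t with hψdef
  have hψ : ∀ t, HasDerivAt ψ (c + L / 2 * (2 * t) - d t) t := by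
    intro t
    have h1 : HasDerivAt (fun t : ℝ => c * t) c t := by
      simpa using (hasDerivAt_id t).const_mul c
    have h2 : HasDerivAt (fun t : ℝ => L / 2 * t ^ 2) (L / 2 * (2 * t)) t := by
      have := (hasDerivAt_pow 2 t).const_mul (L / 2)
      simpa using this
    exact (h1.add h2).sub (hφ t)
  have mono := monotoneOn_of_deriv_nonneg (convex_Icc (0:ℝ) 1)
    (fun t ht => (hψ t).continuousAt.continuousWithinAt)
    (fun t ht => (hψ t).differentiableAt.differentiableWithinAt)
    (fun t ht => by
      rw [(hψ t).deriv]
      rw [interior_Icc] at ht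
      have := hd t ht.1.le ht.2.le
      nlinarith [this])
  have h01 := mono (Set.mem_Icc.2 ⟨le_rfl, zero_le_one⟩) (Set.mem_Icc.2 ⟨zero_le_one, le_rfl⟩)
    zero_le_one
  simp only [hψdef] at h01
  norm_num at h01
  linarith

noncomputable def bsingle {N K : ℕ} (i : Fin K) (v : Blk N) : XVec N K :=
  (WithLp.equiv 2 _).symm (Pi.single i v)

lemma bsingle_same {N K : ℕ} (i : Fin K) (v : Blk N) : bsingle i v i = v :=
  Pi.single_eq_same (M := fun _ : Fin K => Blk N) i v

lemma bsingle_ne {N K : ℕ} {i j : Fin K} (hj : j ≠ i) (v : Blk N) : bsingle i v j = 0 :=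
  Pi.single_eq_of_ne (M := fun _ : Fin K => Blk N) hj v

lemma bsingle_norm {N K : ℕ} (i : Fin K) (v : Blk N) : ‖bsingle i v‖ = ‖v‖ := by
  have h2 : ‖bsingle i v‖ ^ 2 = ‖v‖ ^ 2 := by
    rw [PiLp.norm_sq_eq_of_L2 _ (bsingle i v), Finset.sum_eq_single i]
    · rw [bsingle_same]
    · intro b _ hb; rw [bsingle_ne hb]; simp
    · intro hi; exact absurd (Finset.mem_univ i) hi
  calc ‖bsingle i v‖ = Real.sqrt (‖bsingle i v‖ ^ 2) := (Real.sqrt_sq (norm_nonneg _)).symm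
    _ = Real.sqrt (‖v‖ ^ 2) := by rw [h2]
    _ = ‖v‖ := Real.sqrt_sq (norm_nonneg _)

lemma bsingle_inner {N K : ℕ} (i : Fin K) (u : XVec N K) (v : Blk N) :
    ⟪u, bsingle i v⟫ = ⟪u i, v⟫ := by
  rw [PiLp.inner_apply, Finset.sum_eq_single i]
  · rw [bsingle_same]
  · intro b _ hb; rw [bsingle_ne hb, inner_zero_right]
  · intro hi; exact absurd (Finset.mem_univ i) hi

end helpers

set_option maxHeartbeats 2000000 in
set_option synthInstance.maxHeartbeats 4000000 in
/-- **Lemma 5 (potential decrease, concave case)** for HiBSA: under Assumptions A, B, C-2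
and the parameter conditions `β^r > ρL_y² + 4L_y²/(ρ(γ^r)²) − 2μ`, `β^r > L_{xᵢ}`,
`γ^r` positive nonincreasing with `1/γ^{r+1} − 1/γ^r ≤ ρ/5`, the potential
`P^{r+1} = ℓ(x^{r+1},y^{r+1}) − (γ^r/2)‖y^{r+1}‖² − (2/ρ)(γ^{r−1}/γ^r − 1)‖y^{r+1}‖²
 + (1/(2ρ) + 2/(ρ²γ^r) + (2/ρ²)(1/γ^{r+1} − 1/γ^r))‖y^{r+1} − y^r‖²`
satisfies the stated decrease estimate. -/
theorem hibsa_potential_decrease_concave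
    {N K M : ℕ} [NeZero K]
    -- Assumption A
    (f : XVec N K → YVec M → ℝ)
    (Xi : Fin K → Set (Blk N)) (hXiconv : ∀ i, Convex ℝ (Xi i))
    (hXicomp : ∀ i, IsCompact (Xi i))
    (Y : Set (YVec M)) (hYconv : Convex ℝ Y) (hYcomp : IsCompact Y)
    (h : Fin K → Blk N → ℝ) (hhconv : ∀ i, ConvexOn ℝ Set.univ (h i))
    (g : YVec M → ℝ) (hgconv : ConvexOn ℝ Set.univ g)
    (Gfx : XVec N K → YVec M → XVec N K)
    (hGfx : ∀ x y, HasGradientAt (fun z => f z y) (Gfx x y) x)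
    (Gfy : XVec N K → YVec M → YVec M)
    (hGfy : ∀ x y, HasGradientAt (fun z => f x z) (Gfy x y) y)
    (Lx : Fin K → ℝ)
    (hLx : ∀ (i : Fin K) (y : YVec M), y ∈ Y → ∀ x x' : XVec N K,
      (∀ j, x j ∈ Xi j) → (∀ j, x' j ∈ Xi j) →
      ‖Gfx x' y i - Gfx x y i‖ ≤ Lx i * ‖x' - x‖)
    (Ly : ℝ)
    (hLy : ∀ (x x' : XVec N K) (y y' : YVec M),
      (∀ j, x j ∈ Xi j) → (∀ j, x' j ∈ Xi j) → y ∈ Y → y' ∈ Y →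
      ‖Gfy x' y' - Gfy x y‖ ≤ Ly * Real.sqrt (‖x' - x‖ ^ 2 + ‖y' - y‖ ^ 2))
    -- Assumption B
    (U : Fin K → Blk N → XVec N K → YVec M → ℝ)
    (GU : Fin K → Blk N → XVec N K → YVec M → Blk N)
    (hGU : ∀ i z w y, HasGradientAt (fun u => U i u w y) (GU i z w y) z)
    (μ : Fin K → ℝ) (hμpos : ∀ i, 0 < μ i)
    (μmin : ℝ) (hμmin : μmin = ⨅ i, μ i)
    (hB1 : ∀ (i : Fin K) (w : XVec N K) (y : YVec M), y ∈ Y →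
      ∀ z z' : Blk N, z ∈ Xi i → z' ∈ Xi i →
      ⟪GU i z' w y, z - z'⟫ + μ i / 2 * ‖z - z'‖ ^ 2 ≤ U i z w y - U i z' w y)
    (hB2 : ∀ (i : Fin K) (x : XVec N K) (y : YVec M),
      (∀ j, x j ∈ Xi j) → y ∈ Y → GU i (x i) x y = Gfx x y i)
    (hB3 : ∀ (i : Fin K) (x : XVec N K) (y : YVec M),
      (∀ j, x j ∈ Xi j) → y ∈ Y →
      (∀ z ∈ Xi i, f (blockUpdate x i z) y ≤ U i z x y) ∧ U i (x i) x y = f x y)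
    (Lu : Fin K → ℝ)
    (hB4 : ∀ (i : Fin K) (w : XVec N K) (y : YVec M) (z z' : Blk N),
      ‖GU i z w y - GU i z' w y‖ ≤ Lu i * ‖z - z'‖)
    -- Assumption C-2 (concavity in y)
    (hC2 : ∀ (x : XVec N K) (y z : YVec M), (∀ j, x j ∈ Xi j) → z ∈ Y → y ∈ Y →
      f x y - f x z ≤ ⟪Gfy x z, y - z⟫)
    -- HiBSA iterates (concave case: exact regularized y-update)
    (ρ : ℝ) (hρ : 0 < ρ)
    (βs γ : ℕ → ℝ) (hγpos : ∀ r, 0 < γ r) (hβLx : ∀ (r : ℕ) (i : Fin K), Lx i < βs r)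
    (xs : ℕ → XVec N K) (ys : ℕ → YVec M)
    (hx0 : ∀ j, xs 0 j ∈ Xi j) (hy0 : ys 0 ∈ Y)
    (hxup : ∀ (r : ℕ) (i : Fin K),
      xs (r + 1) i ∈ Xi i ∧
      ∀ z ∈ Xi i,
        U i (xs (r + 1) i) (hibsaW xs r i) (ys r) + h i (xs (r + 1) i)
            + βs r / 2 * ‖xs (r + 1) i - xs r i‖ ^ 2
          ≤ U i z (hibsaW xs r i) (ys r) + h i z + βs r / 2 * ‖z - xs r i‖ ^ 2)
    (hyup : ∀ r : ℕ,
      ys (r + 1) ∈ Y ∧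
      ∀ u ∈ Y,
        f (xs (r + 1)) u - g u - 1 / (2 * ρ) * ‖u - ys r‖ ^ 2 - γ r / 2 * ‖u‖ ^ 2
          ≤ f (xs (r + 1)) (ys (r + 1)) - g (ys (r + 1))
              - 1 / (2 * ρ) * ‖ys (r + 1) - ys r‖ ^ 2 - γ r / 2 * ‖ys (r + 1)‖ ^ 2) 
    -- parameter conditions (Assumption C-3 type conditions)
    (hβbig : ∀ r : ℕ, ρ * Ly ^ 2 + 4 * Ly ^ 2 / (ρ * (γ r) ^ 2) - 2 * μmin < βs r)
    (hγmono : ∀ r : ℕ, γ (r + 1) ≤ γ r)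
    (hγstep : ∀ r : ℕ, 1 / γ (r + 1) - 1 / γ r ≤ ρ / 5) :
    -- conclusion: decrease of the potential function
    ∀ r : ℕ, 2 ≤ r →
      ((f (xs (r + 1)) (ys (r + 1)) + ∑ i, h i (xs (r + 1) i) - g (ys (r + 1)))
          - γ r / 2 * ‖ys (r + 1)‖ ^ 2
          - 2 / ρ * (γ (r - 1) / γ r - 1) * ‖ys (r + 1)‖ ^ 2
          + (1 / (2 * ρ) + 2 / (ρ ^ 2 * γ r) + 2 / ρ ^ 2 * (1 / γ (r + 1) - 1 / γ r))
              * ‖ys (r + 1) - ys r‖ ^ 2)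
        ≤ ((f (xs r) (ys r) + ∑ i, h i (xs r i) - g (ys r))
              - γ (r - 1) / 2 * ‖ys r‖ ^ 2
              - 2 / ρ * (γ (r - 2) / γ (r - 1) - 1) * ‖ys r‖ ^ 2
              + (1 / (2 * ρ) + 2 / (ρ ^ 2 * γ (r - 1)) + 2 / ρ ^ 2 * (1 / γ r - 1 / γ (r - 1)))
                  * ‖ys r - ys (r - 1)‖ ^ 2)
            - (βs r / 2 + μmin - (ρ * Ly ^ 2 / 2 + 2 * Ly ^ 2 / (ρ * (γ r) ^ 2)))
                * ‖xs (r + 1) - xs r‖ ^ 2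
            - 1 / (10 * ρ) * ‖ys (r + 1) - ys r‖ ^ 2
            + (γ (r - 1) - γ r) / 2 * ‖ys (r + 1)‖ ^ 2
            + 2 / ρ * (γ (r - 2) / γ (r - 1) - γ (r - 1) / γ r) * ‖ys r‖ ^ 2 := by
  intro r hr
  have hr1 : r - 1 + 1 = r := by omega
  have hγ0 : (0:ℝ) < γ r := hγpos r
  have hγm : (0:ℝ) < γ (r-1) := hγpos (r-1)
  have hγp : (0:ℝ) < γ (r+1) := hγpos (r+1)
  -- feasibility of iterates
  have feasx : ∀ m j, xs m j ∈ Xi j := by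
    intro m
    cases m with
    | zero => exact hx0
    | succ n => intro j; exact (hxup n j).1
  have feasy : ∀ m, ys m ∈ Y := by
    intro m
    cases m with
    | zero => exact hy0
    | succ n => exact (hyup n).1
  -- y-update: strong-concavity quadratic-growth inequality
  have lemY : ∀ (r' : ℕ) (u : YVec M), u ∈ Y →
      f (xs (r'+1)) u - g u - γ r' / 2 * ‖u‖ ^ 2 - 1/(2*ρ) * ‖u - ys r'‖ ^ 2
        + (γ r' + 1/ρ)/2 * ‖u - ys (r'+1)‖ ^ 2
      ≤ f (xs (r'+1)) (ys (r'+1)) - g (ys (r'+1)) - γ r' / 2 * ‖ys (r'+1)‖ ^ 2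
        - 1/(2*ρ) * ‖ys (r'+1) - ys r'‖ ^ 2 := by
    intro r' u hu
    have hx'feas : ∀ j, xs (r'+1) j ∈ Xi j := feasx (r'+1)
    set Φ : YVec M → ℝ :=
      fun v => g v + γ r' / 2 * ‖v‖ ^ 2 + 1/(2*ρ) * ‖v - ys r'‖ ^ 2 - f (xs (r'+1)) v with hPhi
    have key : Φ (ys (r'+1)) + (γ r' + 1/ρ)/2 * ‖u - ys (r'+1)‖ ^ 2 ≤ Φ u := by
      apply hibsa_min_quad (x := ys (r'+1)) (z := u) (m := γ r' + 1/ρ)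
      · intro t ht0 ht1
        have hmem : ys (r'+1) + t • (u - ys (r'+1)) ∈ Y :=
          hibsa_seg_mem hYconv (feasy (r'+1)) hu ht0.le ht1
        have hfseg :
            - f (xs (r'+1)) (ys (r'+1) + t • (u - ys (r'+1)))
              ≤ (1-t) * (- f (xs (r'+1)) (ys (r'+1))) + t * (- f (xs (r'+1)) u)
                - (0:ℝ)/2 * t * (1-t) * ‖u - ys (r'+1)‖ ^ 2 := by
          apply hibsa_seg_ineq Y (fun v => - f (xs (r'+1)) v) (fun v => -(Gfy (xs (r'+1)) v)) 0
            ?_ (feasy (r'+1)) hu ht0.le ht1 hmem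
          intro z hz z' hz'
          have hc := hC2 (xs (r'+1)) z z' hx'feas hz' hz
          rw [inner_neg_left]
          linarith
        have hgseg : g (ys (r'+1) + t • (u - ys (r'+1))) ≤ (1-t) * g (ys (r'+1)) + t * g u := by
          have he : ys (r'+1) + t • (u - ys (r'+1)) = (1-t) • ys (r'+1) + t • u := by module
          rw [he]
          exact hgconv.2 (Set.mem_univ _) (Set.mem_univ _) (by linarith) ht0.le (by ring)
        have hq1 : γ r'/2 * ‖ys (r'+1) + t • (u - ys (r'+1))‖ ^ 2
            = γ r'/2 * ((1-t) * ‖ys (r'+1)‖ ^ 2 + t * ‖u‖ ^ 2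
                - t * (1-t) * ‖u - ys (r'+1)‖ ^ 2) := by
          have h0 := hibsa_seg_norm_sq (ys (r'+1)) u 0 t
          simp only [sub_zero] at h0
          rw [h0]
        have hq2 : 1/(2*ρ) * ‖ys (r'+1) + t • (u - ys (r'+1)) - ys r'‖ ^ 2
            = 1/(2*ρ) * ((1-t) * ‖ys (r'+1) - ys r'‖ ^ 2 + t * ‖u - ys r'‖ ^ 2
                - t * (1-t) * ‖u - ys (r'+1)‖ ^ 2) := by
          rw [hibsa_seg_norm_sq (ys (r'+1)) u (ys r') t]
        simp only [hPhi]
        ring_nf at hfseg hgseg hq1 hq2 ⊢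
        linarith [hfseg, hgseg, hq1, hq2]
      · intro t ht0 ht1
        have hmem : ys (r'+1) + t • (u - ys (r'+1)) ∈ Y :=
          hibsa_seg_mem hYconv (feasy (r'+1)) hu ht0.le ht1
        have hmin := (hyup r').2 _ hmem
        simp only [hPhi]
        linarith
    simp only [hPhi] at key
    linarith
  -- cross-difference bound via the fundamental theorem of calculus along the y-segment
  have lemD : f (xs (r+1)) (ys (r+1)) - f (xs r) (ys (r+1))
      ≤ f (xs (r+1)) (ys r) - f (xs r) (ys r)
        + |Ly| * ‖xs (r+1) - xs r‖ * ‖ys (r+1) - ys r‖ := by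
    set Δ : YVec M := ys (r+1) - ys r with hΔ
    set φ : ℝ → ℝ :=
      fun t => f (xs (r+1)) (ys r + t • Δ) - f (xs r) (ys r + t • Δ) with hφdef
    have hφ : ∀ t, HasDerivAt φ
        (⟪Gfy (xs (r+1)) (ys r + t • Δ), Δ⟫ - ⟪Gfy (xs r) (ys r + t • Δ), Δ⟫) t := by
      intro t
      have hp : HasDerivAt (fun s : ℝ => ys r + s • Δ) Δ t := by
        simpa using ((hasDerivAt_id t).smul_const Δ).const_add (ys r)
      have h1 : HasDerivAt (fun s : ℝ => f (xs (r+1)) (ys r + s • Δ))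
          (⟪Gfy (xs (r+1)) (ys r + t • Δ), Δ⟫) t := by
        simpa [InnerProductSpace.toDual_apply_apply, Function.comp_def] using
          ((hGfy (xs (r+1)) (ys r + t • Δ)).hasFDerivAt.comp_hasDerivAt t hp)
      have h2 : HasDerivAt (fun s : ℝ => f (xs r) (ys r + s • Δ))
          (⟪Gfy (xs r) (ys r + t • Δ), Δ⟫) t := by
        simpa [InnerProductSpace.toDual_apply_apply, Function.comp_def] using
          ((hGfy (xs r) (ys r + t • Δ)).hasFDerivAt.comp_hasDerivAt t hp)
      exact h1.sub h2
    have hd : ∀ t, 0 ≤ t → t ≤ 1 →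
        ⟪Gfy (xs (r+1)) (ys r + t • Δ), Δ⟫ - ⟪Gfy (xs r) (ys r + t • Δ), Δ⟫
          ≤ |Ly| * ‖xs (r+1) - xs r‖ * ‖Δ‖ + 0 * t := by
      intro t ht0 ht1
      have hyt : ys r + t • Δ ∈ Y := by
        have : ys r + t • (ys (r+1) - ys r) ∈ Y :=
          hibsa_seg_mem hYconv (feasy r) (feasy (r+1)) ht0 ht1
        simpa [hΔ] using this
      have h2 := hLy (xs r) (xs (r+1)) (ys r + t • Δ) (ys r + t • Δ)
        (feasx r) (feasx (r+1)) hyt hyt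
      rw [sub_self, norm_zero] at h2
      have hz : (0:ℝ) ^ 2 = 0 := by norm_num
      rw [hz, add_zero, Real.sqrt_sq (norm_nonneg _)] at h2
      have h3 : ‖Gfy (xs (r+1)) (ys r + t • Δ) - Gfy (xs r) (ys r + t • Δ)‖
          ≤ |Ly| * ‖xs (r+1) - xs r‖ :=
        h2.trans (mul_le_mul_of_nonneg_right (le_abs_self Ly) (norm_nonneg _))
      have h4 : ⟪Gfy (xs (r+1)) (ys r + t • Δ), Δ⟫ - ⟪Gfy (xs r) (ys r + t • Δ), Δ⟫
          = ⟪Gfy (xs (r+1)) (ys r + t • Δ) - Gfy (xs r) (ys r + t • Δ), Δ⟫ :=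
        (inner_sub_left _ _ _).symm
      rw [h4]
      have h5 := real_inner_le_norm
        (Gfy (xs (r+1)) (ys r + t • Δ) - Gfy (xs r) (ys r + t • Δ)) Δ
      have h6 := mul_le_mul_of_nonneg_right h3 (norm_nonneg Δ)
      linarith
    have := hibsa_mono_helper hφ hd
    have he1 : ys r + (1:ℝ) • Δ = ys (r+1) := by rw [hΔ]; module
    have he0 : ys r + (0:ℝ) • Δ = ys r := by rw [hΔ]; module
    simp only [hφdef, he1, he0] at this
    rw [hΔ] at this
    linarith
  -- block descent lemma for f
  have lemdesc : ∀ (w : XVec N K), (∀ j, w j ∈ Xi j) → ∀ (i : Fin K) (z : Blk N), z ∈ Xi i →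
      f (blockUpdate w i z) (ys r)
        ≤ f w (ys r) + ⟪Gfx w (ys r) i, z - w i⟫ + Lx i / 2 * ‖z - w i‖ ^ 2 := by
    intro w hw i z hz
    set dv : XVec N K := bsingle i (z - w i) with hdv
    set φ : ℝ → ℝ := fun t => f (w + t • dv) (ys r) with hφdef
    have hφ : ∀ t, HasDerivAt φ (⟪Gfx (w + t • dv) (ys r), dv⟫) t := by
      intro t
      have hp : HasDerivAt (fun s : ℝ => w + s • dv) dv t := by
        simpa using ((hasDerivAt_id t).smul_const dv).const_add w
      simpa [InnerProductSpace.toDual_apply_apply, Function.comp_def] using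
        ((hGfx (w + t • dv) (ys r)).hasFDerivAt.comp_hasDerivAt t hp)
    have hfeas : ∀ t : ℝ, 0 ≤ t → t ≤ 1 → ∀ j, (w + t • dv) j ∈ Xi j := by
      intro t ht0 ht1 j
      by_cases hj : j = i
      · subst hj
        have hsh : (w + t • dv) j = w j + t • (z - w j) := by
          show w j + t • dv j = _
          rw [hdv, bsingle_same]
        rw [hsh]
        exact hibsa_seg_mem (hXiconv j) (hw j) hz ht0 ht1
      · have hsh : (w + t • dv) j = w j := by
          show w j + t • dv j = _
          rw [hdv, bsingle_ne hj, smul_zero, add_zero]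
        rw [hsh]
        exact hw j
    have hd : ∀ t, 0 ≤ t → t ≤ 1 → ⟪Gfx (w + t • dv) (ys r), dv⟫
        ≤ ⟪Gfx w (ys r) i, z - w i⟫ + (Lx i * ‖z - w i‖ ^ 2) * t := by
      intro t ht0 ht1
      have hi0 : ⟪Gfx w (ys r), dv⟫ = ⟪Gfx w (ys r) i, z - w i⟫ := by
        rw [hdv]; exact bsingle_inner i _ _
      have h4 : ⟪Gfx (w + t • dv) (ys r), dv⟫ - ⟪Gfx w (ys r), dv⟫
          = ⟪Gfx (w + t • dv) (ys r) - Gfx w (ys r), dv⟫ := (inner_sub_left _ _ _).symm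
      have hsi : ⟪Gfx (w + t • dv) (ys r) - Gfx w (ys r), dv⟫
          = ⟪Gfx (w + t • dv) (ys r) i - Gfx w (ys r) i, z - w i⟫ := by
        rw [hdv]
        exact bsingle_inner i _ _
      have hcs := real_inner_le_norm
        (Gfx (w + t • dv) (ys r) i - Gfx w (ys r) i) (z - w i)
      have hlx := hLx i (ys r) (feasy r) w (w + t • dv) hw (hfeas t ht0 ht1)
      have hwt : ‖(w + t • dv) - w‖ = t * ‖z - w i‖ := by
        have hsh : (w + t • dv) - w = t • dv := by abel
        rw [hsh, norm_smul, Real.norm_eq_abs, abs_of_nonneg ht0, hdv, bsingle_norm]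
      rw [hwt] at hlx
      have h6 := mul_le_mul_of_nonneg_right hlx (norm_nonneg (z - w i))
      have he : Lx i * (t * ‖z - w i‖) * ‖z - w i‖ = (Lx i * ‖z - w i‖ ^ 2) * t := by ring
      nlinarith [hcs, h6, hi0, h4, hsi]
    have hmono := hibsa_mono_helper hφ hd
    have he1 : w + (1:ℝ) • dv = blockUpdate w i z := by
      ext j : 1
      by_cases hj : j = i
      · subst hj
        show w j + (1:ℝ) • dv j = _
        rw [hdv, bsingle_same, one_smul, blockUpdate, WithLp.ofLp_toLp (x := Function.update w.ofLp j z), Function.update_self]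
        abel
      · show w j + (1:ℝ) • dv j = _
        rw [hdv, bsingle_ne hj, smul_zero, add_zero, blockUpdate, WithLp.ofLp_toLp (x := Function.update w.ofLp i z), Function.update_of_ne hj]
    have he0 : w + (0:ℝ) • dv = w := by rw [zero_smul, add_zero]
    simp only [hφdef, he1, he0] at hmono
    linarith
  -- per-block minimizer quadratic growth
  have hμle : ∀ i : Fin K, μmin ≤ μ i := by
    intro i
    rw [hμmin]
    exact ciInf_le (Finite.bddBelow_range _) i
  have hWfeas : ∀ i : Fin K, ∀ j, hibsaW xs r i j ∈ Xi j := by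
    intro i j
    show (if (j : ℕ) < (i : ℕ) then xs (r + 1) j else xs r j) ∈ Xi j
    split
    · exact feasx (r+1) j
    · exact feasx r j
  have hwi : ∀ i : Fin K, hibsaW xs r i i = xs r i := by
    intro i
    show (if (i : ℕ) < (i : ℕ) then xs (r + 1) i else xs r i) = xs r i
    simp
  have blockstep : ∀ (i : Fin K),
      f (blockUpdate (hibsaW xs r i) i (xs (r+1) i)) (ys r) + h i (xs (r+1) i)
        + (βs r/2 + μmin) * ‖xs (r+1) i - xs r i‖ ^ 2
      ≤ f (hibsaW xs r i) (ys r) + h i (xs r i) := by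
    intro i
    have hwf := hWfeas i
    have hUtight : U i (xs r i) (hibsaW xs r i) (ys r) = f (hibsaW xs r i) (ys r) := by
      have := (hB3 i (hibsaW xs r i) (ys r) hwf (feasy r)).2
      rwa [hwi i] at this
    have blockmin :
        U i (xs (r+1) i) (hibsaW xs r i) (ys r) + h i (xs (r+1) i)
          + βs r/2 * ‖xs (r+1) i - xs r i‖ ^ 2
          + (βs r + μ i)/2 * ‖xs r i - xs (r+1) i‖ ^ 2
        ≤ U i (xs r i) (hibsaW xs r i) (ys r) + h i (xs r i)
          + βs r/2 * ‖xs r i - xs r i‖ ^ 2 := by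
      set Φ : Blk N → ℝ :=
        fun v => U i v (hibsaW xs r i) (ys r) + h i v + βs r/2 * ‖v - xs r i‖ ^ 2 with hPhi
      have key : Φ (xs (r+1) i) + (βs r + μ i)/2 * ‖xs r i - xs (r+1) i‖ ^ 2
          ≤ Φ (xs r i) := by
        apply hibsa_min_quad (x := xs (r+1) i) (z := xs r i) (m := βs r + μ i)
        · intro t ht0 ht1
          have hmem : xs (r+1) i + t • (xs r i - xs (r+1) i) ∈ Xi i :=
            hibsa_seg_mem (hXiconv i) (feasx (r+1) i) (feasx r i) ht0.le ht1
          have hU := hibsa_seg_ineq (Xi i) (fun v => U i v (hibsaW xs r i) (ys r))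
            (fun v => GU i v (hibsaW xs r i) (ys r)) (μ i)
            (fun z' hz' z'' hz'' => hB1 i (hibsaW xs r i) (ys r) (feasy r) z' z'' hz' hz'')
            (feasx (r+1) i) (feasx r i) ht0.le ht1 hmem
          have hh : h i (xs (r+1) i + t • (xs r i - xs (r+1) i))
              ≤ (1-t) * h i (xs (r+1) i) + t * h i (xs r i) := by
            have he : xs (r+1) i + t • (xs r i - xs (r+1) i)
                = (1-t) • xs (r+1) i + t • xs r i := by module
            rw [he]
            exact (hhconv i).2 (Set.mem_univ _) (Set.mem_univ _) (by linarith) ht0.le (by ring)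
          have hq : βs r/2 * ‖xs (r+1) i + t • (xs r i - xs (r+1) i) - xs r i‖ ^ 2
              = βs r/2 * ((1-t) * ‖xs (r+1) i - xs r i‖ ^ 2 + t * ‖xs r i - xs r i‖ ^ 2
                  - t * (1-t) * ‖xs r i - xs (r+1) i‖ ^ 2) := by
            rw [hibsa_seg_norm_sq (xs (r+1) i) (xs r i) (xs r i) t]
          simp only [hPhi]
          ring_nf at hU hh hq ⊢
          linarith [hU, hh, hq]
        · intro t ht0 ht1
          have hmem : xs (r+1) i + t • (xs r i - xs (r+1) i) ∈ Xi i :=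
            hibsa_seg_mem (hXiconv i) (feasx (r+1) i) (feasx r i) ht0.le ht1
          have hmin := (hxup r i).2 _ hmem
          simp only [hPhi]
          linarith
      simp only [hPhi] at key
      linarith
    have hUlow : f (hibsaW xs r i) (ys r) + ⟪Gfx (hibsaW xs r i) (ys r) i, xs (r+1) i - xs r i⟫
        + μ i/2 * ‖xs (r+1) i - xs r i‖ ^ 2
        ≤ U i (xs (r+1) i) (hibsaW xs r i) (ys r) := by
      have hb1 := hB1 i (hibsaW xs r i) (ys r) (feasy r) (xs (r+1) i) (xs r i)
        (feasx (r+1) i) (feasx r i)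
      have hb2 := hB2 i (hibsaW xs r i) (ys r) hwf (feasy r)
      rw [hwi i] at hb2
      rw [hb2, hUtight] at hb1
      linarith
    have hdesc := lemdesc (hibsaW xs r i) hwf i (xs (r+1) i) (feasx (r+1) i)
    rw [hwi i] at hdesc
    have hβ := hβLx r i
    have hμi := hμle i
    have hD : (0:ℝ) ≤ ‖xs (r+1) i - xs r i‖ ^ 2 := sq_nonneg _
    have hnrm : ‖xs r i - xs (r+1) i‖ ^ 2 = ‖xs (r+1) i - xs r i‖ ^ 2 := by
      rw [norm_sub_rev]
    rw [hnrm] at blockmin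
    have hz0 : βs r/2 * ‖xs r i - xs r i‖ ^ 2 = 0 := by simp
    rw [hz0] at blockmin
    have hp1 : 0 ≤ (βs r - Lx i) * ‖xs (r+1) i - xs r i‖ ^ 2 :=
      mul_nonneg (by linarith) hD
    have hp2 : 0 ≤ (μ i - μmin) * ‖xs (r+1) i - xs r i‖ ^ 2 :=
      mul_nonneg (by linarith) hD
    ring_nf at blockmin hUlow hdesc hp1 hp2 ⊢
    linarith [blockmin, hUlow, hdesc, hp1, hp2]
  -- telescoping over blocks
  have FactA : f (xs (r+1)) (ys r) + (∑ i, h i (xs (r+1) i))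
      + (βs r/2 + μmin) * ‖xs (r+1) - xs r‖ ^ 2
      ≤ f (xs r) (ys r) + ∑ i, h i (xs r i) := by
    set W : ℕ → XVec N K :=
      fun k => WithLp.toLp 2 (fun j : Fin K => if (j : ℕ) < k then xs (r+1) j else xs r j) with hWdef
    set D : ℕ → ℝ :=
      fun j => if hj : j < K then ‖xs (r+1) ⟨j,hj⟩ - xs r ⟨j,hj⟩‖ ^ 2 else 0 with hDdef
    set Hn : ℕ → ℝ :=
      fun j => if hj : j < K then h ⟨j,hj⟩ (xs (r+1) ⟨j,hj⟩) else 0 with hHndef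
    set Ho : ℕ → ℝ :=
      fun j => if hj : j < K then h ⟨j,hj⟩ (xs r ⟨j,hj⟩) else 0 with hHodef
    have hW0 : W 0 = xs r := by
      ext j; simp [hWdef, PiLp.toLp_apply]
    have hWK : W K = xs (r+1) := by
      ext j; simp [hWdef, PiLp.toLp_apply, j.isLt]
    have hWhib : ∀ (k : ℕ) (hk : k < K), W k = hibsaW xs r ⟨k, hk⟩ := by
      intro k hk
      rw [hWdef]
      rfl
    have hWsucc : ∀ (k : ℕ) (hk : k < K),
        blockUpdate (W k) ⟨k,hk⟩ (xs (r+1) ⟨k,hk⟩) = W (k+1) := by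
      intro k hk
      ext j
      by_cases hj : j = (⟨k,hk⟩ : Fin K)
      · subst hj
        rw [blockUpdate, PiLp.toLp_apply]
        rw [Function.update_self]
        have : ((⟨k,hk⟩ : Fin K) : ℕ) < k + 1 := Nat.lt_succ_self k
        simp only [hWdef, PiLp.toLp_apply]
        rw [if_pos this]
      · rw [blockUpdate, PiLp.toLp_apply]
        rw [Function.update_of_ne hj]
        have hjk : (j : ℕ) ≠ k := by
          intro hc
          exact hj (Fin.ext hc)
        simp only [hWdef, PiLp.toLp_apply]
        by_cases hlt : (j : ℕ) < k
        · rw [if_pos hlt, if_pos (by omega)]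
        · rw [if_neg hlt, if_neg (by omega)]
    have tele : ∀ k : ℕ, k ≤ K →
        f (W k) (ys r) + ∑ j ∈ Finset.range k, (Hn j + (βs r/2 + μmin) * D j)
          ≤ f (xs r) (ys r) + ∑ j ∈ Finset.range k, Ho j := by
      intro k
      induction k with
      | zero => intro _; simp [hW0]
      | succ n ih =>
        intro hn
        have hnK : n < K := hn
        have hstep := blockstep ⟨n, hnK⟩
        rw [← hWhib n hnK, hWsucc n hnK] at hstep
        rw [Finset.sum_range_succ, Finset.sum_range_succ]
        have hDn : D n = ‖xs (r+1) ⟨n,hnK⟩ - xs r ⟨n,hnK⟩‖ ^ 2 := by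
          simp only [hDdef]; rw [dif_pos hnK]
        have hHnn : Hn n = h ⟨n,hnK⟩ (xs (r+1) ⟨n,hnK⟩) := by
          simp only [hHndef]; rw [dif_pos hnK]
        have hHon : Ho n = h ⟨n,hnK⟩ (xs r ⟨n,hnK⟩) := by
          simp only [hHodef]; rw [dif_pos hnK]
        have ihn := ih (by omega)
        rw [hDn, hHnn, hHon]
        linarith
    have hfin := tele K le_rfl
    rw [hWK] at hfin
    have hsplit : ∑ j ∈ Finset.range K, (Hn j + (βs r/2 + μmin) * D j)
        = (∑ j ∈ Finset.range K, Hn j) + (βs r/2 + μmin) * ∑ j ∈ Finset.range K, D j := by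
      rw [Finset.sum_add_distrib, Finset.mul_sum]
    rw [hsplit] at hfin
    have hsum1 : ∑ j ∈ Finset.range K, Hn j = ∑ i : Fin K, h i (xs (r+1) i) := by
      rw [← Fin.sum_univ_eq_sum_range]
      apply Finset.sum_congr rfl
      intro i _
      simp only [hHndef]
      rw [dif_pos i.isLt]
    have hsum0 : ∑ j ∈ Finset.range K, Ho j = ∑ i : Fin K, h i (xs r i) := by
      rw [← Fin.sum_univ_eq_sum_range]
      apply Finset.sum_congr rfl
      intro i _
      simp only [hHodef]
      rw [dif_pos i.isLt]
    have hsumD : ∑ j ∈ Finset.range K, D j = ‖xs (r+1) - xs r‖ ^ 2 := by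
      rw [← Fin.sum_univ_eq_sum_range]
      rw [PiLp.norm_sq_eq_of_L2 _ (xs (r+1) - xs r)]
      apply Finset.sum_congr rfl
      intro i _
      simp only [hDdef]
      rw [dif_pos i.isLt]
      rfl
    rw [hsum1, hsum0, hsumD] at hfin
    linarith
  -- the two y-update growth inequalities
  have FactB := lemY r (ys r) (feasy r)
  rw [sub_self, norm_zero, norm_sub_rev (ys r) (ys (r+1))] at FactB
  have FactC := lemY (r-1) (ys (r+1)) (feasy (r+1))
  rw [hr1] at FactC
  have FactD' := lemD
  have hT' : 1/(2*ρ)*‖ys (r+1) - ys (r-1)‖^2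
      ≤ 1/(2*ρ)*(‖ys (r+1) - ys r‖ + ‖ys r - ys (r-1)‖)^2 := by
    have h1 : ys (r+1) - ys (r-1) = (ys (r+1) - ys r) + (ys r - ys (r-1)) := by abel
    have h2 : ‖ys (r+1) - ys (r-1)‖ ≤ ‖ys (r+1) - ys r‖ + ‖ys r - ys (r-1)‖ := by
      rw [h1]; exact norm_add_le _ _
    have h3 := pow_le_pow_left₀ (norm_nonneg _) h2 2
    exact mul_le_mul_of_nonneg_left h3 (by positivity)
  set La := |Ly| with hLadef
  have hLa2 : La ^ 2 = Ly ^ 2 := by rw [hLadef]; exact sq_abs Ly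
  set p := ‖xs (r+1) - xs r‖ with hpdef
  set q := ‖ys (r+1) - ys r‖ with hqdef
  set sn := ‖ys r - ys (r-1)‖ with hsndef
  have hγ0' : γ r ≠ 0 := ne_of_gt hγ0
  have hρ' : ρ ≠ 0 := ne_of_gt hρ
  have hmono' : γ r ≤ γ (r-1) := by
    have := hγmono (r-1); rwa [hr1] at this
  -- Step E : upper bound on the increase of ℓ
  have StepE : (f (xs (r+1)) (ys (r+1)) + (∑ i, h i (xs (r+1) i)) - g (ys (r+1)))
      - (f (xs r) (ys r) + (∑ i, h i (xs r i)) - g (ys r))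
      ≤ -(βs r/2 + μmin)*p^2 + La * p*q
        + γ (r-1)/2*(‖ys (r+1)‖^2 - ‖ys r‖^2) + 1/ρ*q*sn - γ (r-1)/2*q^2 := by
    ring_nf at FactA FactC FactD' hT' ⊢
    linarith [FactA, FactC, FactD', hT']
  -- the key contraction inequality
  have RIneq : γ (r-1)/2*q^2 + γ r/2*q^2 + 1/ρ*q^2
      ≤ La * p*q + 1/ρ*q*sn + (γ (r-1) - γ r)/2*(‖ys (r+1)‖^2 - ‖ys r‖^2) := by
    ring_nf at FactB FactC FactD' hT' ⊢
    linarith [FactB, FactC, FactD', hT']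
  have RIneq' := mul_le_mul_of_nonneg_left RIneq
    (le_of_lt (by positivity : (0:ℝ) < 4/(ρ*γ r)))
  -- bridges for cancellations that need `γ r ≠ 0`
  have Bz1 : 4/(ρ*γ r)*(γ r/2*q^2) = 2/ρ*q^2 := by field_simp; ring
  have Bz2 : 4/(ρ*γ r)*((γ (r-1) - γ r)/2*(‖ys (r+1)‖^2 - ‖ys r‖^2))
      = 2/ρ*(γ (r-1)/γ r - 1)*(‖ys (r+1)‖^2 - ‖ys r‖^2) := by
    field_simp; ring
  -- Young inequalities
  have Y1d : La * p*q ≤ ρ*La^2/2*p^2 + 1/(2*ρ)*q^2 := by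
    have heq : ρ*La^2/2*p^2 + 1/(2*ρ)*q^2 - La * p*q = (ρ*La * p - q)^2/(2*ρ) := by
      field_simp; ring
    have hnn : (0:ℝ) ≤ (ρ*La * p - q)^2/(2*ρ) := by positivity
    linarith
  have Y2d : 4/(ρ*γ r)*(La * p*q) ≤ 2*La^2/(ρ*(γ r)^2)*p^2 + 2/ρ*q^2 := by
    have heq : 2*La^2/(ρ*(γ r)^2)*p^2 + 2/ρ*q^2 - 4/(ρ*γ r)*(La * p*q)
        = 2*(La * p - γ r*q)^2/(ρ*(γ r)^2) := by
      field_simp; ring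
    have hnn : (0:ℝ) ≤ 2*(La * p - γ r*q)^2/(ρ*(γ r)^2) := by positivity
    linarith
  have hbrA : ρ*Ly^2/2*p^2 = ρ*La^2/2*p^2 := by rw [hLa2]
  have hbrB : 2*Ly^2/(ρ*(γ r)^2)*p^2 = 2*La^2/(ρ*(γ r)^2)*p^2 := by rw [hLa2]
  have Y3d : 1/ρ*q*sn ≤ 1/(2*ρ)*q^2 + 1/(2*ρ)*sn^2 := by
    have heq : 1/(2*ρ)*q^2 + 1/(2*ρ)*sn^2 - 1/ρ*q*sn = (q - sn)^2/(2*ρ) := by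
      field_simp; ring
    have hnn : (0:ℝ) ≤ (q - sn)^2/(2*ρ) := by positivity
    linarith
  have Y4d : 4/(ρ*γ r)*(1/ρ*q*sn) ≤ 2/(ρ^2*γ r)*q^2 + 2/(ρ^2*γ r)*sn^2 := by
    have heq : 2/(ρ^2*γ r)*q^2 + 2/(ρ^2*γ r)*sn^2 - 4/(ρ*γ r)*(1/ρ*q*sn)
        = 2*(q - sn)^2/(ρ^2*γ r) := by
      field_simp; ring
    have hnn : (0:ℝ) ≤ 2*(q - sn)^2/(ρ^2*γ r) := by positivity
    linarith
  have hdrop : 0 ≤ 4/(ρ*γ r)*((γ (r-1) - γ r)/2*q^2) := by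
    have h1 : (0:ℝ) ≤ (γ (r-1) - γ r)/2 := by linarith
    have h2 : (0:ℝ) ≤ 4/(ρ*γ r) := by positivity
    exact mul_nonneg h2 (mul_nonneg h1 (sq_nonneg q))
  have hslack : 0 ≤ γ (r-1)/2*q^2 := mul_nonneg (by linarith) (sq_nonneg q)
  have hstep2 : 2/ρ^2*((1/γ (r+1) - 1/γ r)*q^2) ≤ 2/(5*ρ)*q^2 := by
    have h1 := hγstep r
    have h2 : (1/γ (r+1) - 1/γ r)*q^2 ≤ ρ/5*q^2 :=
      mul_le_mul_of_nonneg_right h1 (sq_nonneg q)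
    have h3 := mul_le_mul_of_nonneg_left h2 (by positivity : (0:ℝ) ≤ 2/ρ^2)
    have h4 : 2/ρ^2*(ρ/5*q^2) = 2/(5*ρ)*q^2 := by field_simp
    linarith
  -- final assembly
  ring_nf at StepE RIneq' Bz1 Bz2 Y1d Y2d Y3d Y4d hdrop hslack hstep2 hbrA hbrB ⊢
  linarith [StepE, RIneq', Bz1, Bz2, Y1d, Y2d, Y3d, Y4d, hdrop, hslack, hstep2, hbrA, hbrB]
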